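/- Let M be a finite free 𝔖-module and let f : M → M be an additive map satisfying f(am) = φ(a)f(m) for all a ∈ 𝔖 and m ∈ M. Then the set M^{f=1} = {m ∈ M : f(m) = m} is an 𝔽-subspace of M which is finite-dimensional over 𝔽. -/

import Mathlib

open PowerSeries TensorProduct

attribute [local instance] ZMod.algebra

noncomputable section

/-- The inclusion `𝔽 → 𝔖 = (k ⊗_{𝔽_p} 𝔽)[[u]]` as constant power series. -/
def iFF (p : ℕ) [Fact p.Prime] (k 𝔽 : Type) [Field k] [Fintype k] [CharP k p]
    [Field 𝔽] [Fintype 𝔽] [CharP 𝔽 p] : 𝔽 →+* PowerSeries (k ⊗[ZMod p] 𝔽) :=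
  (PowerSeries.C (R := k ⊗[ZMod p] 𝔽)).comp
    (Algebra.TensorProduct.includeRight (R := ZMod p) (A := k) (B := 𝔽)).toRingHom

/-- if `M` is a finite free `𝔖`-module and `f : M → M` is additive with
`f(a•m) = φ(a)•f(m)`, then `M^{f=1}` is an `𝔽`-subspace of `M` of finite dimension
over `𝔽` (it is spanned by finitely many fixed vectors). -/
theorem statement17
    (p : ℕ) [Fact p.Prime] (k 𝔽 : Type) [Field k] [Fintype k] [CharP k p]
    [Field 𝔽] [Fintype 𝔽] [CharP 𝔽 p]
    (φ : PowerSeries (k ⊗[ZMod p] 𝔽) →+* PowerSeries (k ⊗[ZMod p] 𝔽))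
    (hφC : ∀ (a : k) (b : 𝔽),
      φ (PowerSeries.C (a ⊗ₜ[ZMod p] b)) = PowerSeries.C ((a ^ p) ⊗ₜ[ZMod p] b))
    (hφ0 : ∀ (f : PowerSeries (k ⊗[ZMod p] 𝔽)) (m : ℕ), ¬ p ∣ m →
      PowerSeries.coeff m (φ f) = 0)
    (hφ1 : ∀ (f : PowerSeries (k ⊗[ZMod p] 𝔽)) (n : ℕ),
      PowerSeries.coeff (p * n) (φ f) =
        PowerSeries.constantCoeff (φ (PowerSeries.C (PowerSeries.coeff n f))))
    (M : Type) [AddCommGroup M] [Module (PowerSeries (k ⊗[ZMod p] 𝔽)) M]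
    [Module.Finite (PowerSeries (k ⊗[ZMod p] 𝔽)) M]
    [Module.Free (PowerSeries (k ⊗[ZMod p] 𝔽)) M]
    (f : M → M)
    (hadd : ∀ x y, f (x + y) = f x + f y)
    (hsmul : ∀ (a : PowerSeries (k ⊗[ZMod p] 𝔽)) (m : M), f (a • m) = φ a • f m) :
    (∀ (c : 𝔽) (m : M), f m = m → f ((iFF p k 𝔽 c) • m) = (iFF p k 𝔽 c) • m) ∧
    (∀ m m' : M, f m = m → f m' = m' → f (m + m') = m + m') ∧
    (∃ (n : ℕ) (v : Fin n → M), (∀ i, f (v i) = v i) ∧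
      ∀ m : M, f m = m → ∃ c : Fin n → 𝔽, m = ∑ i, (iFF p k 𝔽 (c i)) • v i) := by
  classical
  have hp2 : 2 ≤ p := (Fact.out : p.Prime).two_le
  have hφiFF : ∀ c : 𝔽, φ (iFF p k 𝔽 c) = iFF p k 𝔽 c := by
    intro c
    have h : iFF p k 𝔽 c = PowerSeries.C ((1 : k) ⊗ₜ[ZMod p] c) := rfl
    rw [h, hφC, one_pow]
  -- φ X = X ^ p
  have hφX : φ (PowerSeries.X) = (PowerSeries.X : PowerSeries (k ⊗[ZMod p] 𝔽)) ^ p := by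
    ext m
    by_cases hm : p ∣ m
    · obtain ⟨j, rfl⟩ := hm
      rw [hφ1]
      rw [PowerSeries.coeff_X, PowerSeries.coeff_X_pow]
      by_cases hj : j = 1
      · subst hj
        simp
      · have : p * j ≠ p := by
          intro h
          have hp' : 0 < p := by omega
          have h' : p * j = p * 1 := by rw [Nat.mul_one]; exact h
          exact hj (Nat.eq_of_mul_eq_mul_left hp' h')
        simp [hj, this]
    · rw [hφ0 _ _ hm, PowerSeries.coeff_X_pow]
      have : m ≠ p := fun h => hm (h ▸ dvd_refl p)
      simp [this]
  have hφXpow : ∀ n : ℕ, φ (PowerSeries.X ^ n) =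
      (PowerSeries.X : PowerSeries (k ⊗[ZMod p] 𝔽)) ^ (p * n) := by
    intro n
    rw [map_pow, hφX, ← pow_mul, Nat.mul_comm]
  -- f of negation and subtraction
  have hneg : ∀ x : M, f (-x) = - f x := by
    intro x
    have := hsmul (-1) x
    simpa using this
  have hsub : ∀ x y : M, f (x - y) = f x - f y := by
    intro x y
    rw [sub_eq_add_neg, hadd, hneg, sub_eq_add_neg]
  -- choose a basis
  let ι := Module.Free.ChooseBasisIndex (PowerSeries (k ⊗[ZMod p] 𝔽)) M
  let b : Module.Basis ι (PowerSeries (k ⊗[ZMod p] 𝔽)) M :=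
    Module.Free.chooseBasis (PowerSeries (k ⊗[ZMod p] 𝔽)) M
  -- key: a fixed vector with all constant coefficients zero is zero
  have key : ∀ w : M, f w = w →
      (∀ i, PowerSeries.constantCoeff (b.repr w i) = 0) → w = 0 := by
    intro w hw h0
    have hdvd : ∀ n : ℕ, ∀ i, (PowerSeries.X : PowerSeries (k ⊗[ZMod p] 𝔽)) ^ (n + 1)
        ∣ b.repr w i := by
      intro n
      induction n with
      | zero =>
        intro i
        rw [pow_one, PowerSeries.X_dvd_iff]
        exact h0 i
      | succ n ih =>
        -- from X^(n+1) ∣ all coords, get w = X^(n+1) • w₀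
        choose g hg using ih
        set w₀ : M := ∑ i, g i • b i with hw₀
        have hweq : w = (PowerSeries.X : PowerSeries (k ⊗[ZMod p] 𝔽)) ^ (n + 1) • w₀ := by
          conv_lhs => rw [← b.sum_repr w]
          rw [hw₀, Finset.smul_sum]
          refine Finset.sum_congr rfl fun i _ => ?_
          rw [hg i, mul_smul]
        have hfix : w = (PowerSeries.X : PowerSeries (k ⊗[ZMod p] 𝔽)) ^ (p * (n + 1))
            • f w₀ := by
          conv_lhs => rw [← hw, hweq, hsmul, hφXpow]
        intro i
        have : b.repr w i = (PowerSeries.X : PowerSeries (k ⊗[ZMod p] 𝔽)) ^ (p * (n + 1))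
            * b.repr (f w₀) i := by
          conv_lhs => rw [hfix]
          rw [map_smul]
          rfl
        rw [this]
        exact Dvd.dvd.mul_right (pow_dvd_pow _ (by nlinarith)) _
    have hzero : ∀ i, b.repr w i = 0 := by
      intro i
      ext j
      have := hdvd j i
      rw [PowerSeries.X_pow_dvd_iff] at this
      simpa using this j (by omega)
    have h1 : b.repr w = 0 := Finsupp.ext hzero
    exact b.repr.injective (h1.trans (map_zero _).symm)
  -- the fixed set is finite
  haveI : Finite (k ⊗[ZMod p] 𝔽) := Module.finite_of_finite (ZMod p)
  have hfin : Finite {m : M // f m = m} := by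
    have hinj : Function.Injective
        (fun m : {m : M // f m = m} =>
          (fun i => PowerSeries.constantCoeff (b.repr m.1 i) : ι → k ⊗[ZMod p] 𝔽)) := by
      intro m m' h
      have hwfix : f (m.1 - m'.1) = m.1 - m'.1 := by
        rw [hsub, m.2, m'.2]
      have h0 : ∀ i, PowerSeries.constantCoeff (b.repr (m.1 - m'.1) i) = 0 := by
        intro i
        rw [map_sub]
        have := congrFun h i
        simp only at this
        simp [Finsupp.sub_apply, this]
      have := key _ hwfix h0
      ext
      exact sub_eq_zero.mp this
    exact Finite.of_injective _ hinj
  haveI := hfin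
  haveI : Fintype {m : M // f m = m} := Fintype.ofFinite _
  refine ⟨?_, ?_, ?_⟩
  · intro c m hm
    rw [hsmul, hφiFF, hm]
  · intro m m' hm hm'
    rw [hadd, hm, hm']
  · set n := Fintype.card {m : M // f m = m} with hn
    set e := Fintype.equivFin {m : M // f m = m} with he
    refine ⟨n, fun i => (e.symm i).1, fun i => (e.symm i).2, ?_⟩
    intro m hm
    set i₀ := e ⟨m, hm⟩ with hi₀
    refine ⟨fun i => if i = i₀ then 1 else 0, ?_⟩
    rw [Finset.sum_eq_single_of_mem i₀ (Finset.mem_univ _)]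
    · simp [hi₀]
    · intro j _ hj
      simp [hj]

end
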